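/- Let c(n,k) count the words equal to (ab)^k in the expansion of [(1+a)(1+b)]^n, where a, b are two noncommuting involutions (a² = b² = 1, no other relations). Then c(n,k), d(n,k) (counting words (ab)^k a) and e(n,k) (counting (ba)^k) satisfy: c(n,k)=c(n-1,k)+d(n-1,k)+d(n-1,k-1)+c(n-1,k-1) for n≥2, k≥1, with c(1,k)=δ_{k0}+δ_{k1}; d(n,k)=d(n-1,k)+c(n-1,k)+c(n-1,k+1)+d(n-1,k+1) for n≥2, k≥0, with d(1,k)=δ_{k0}; and the closed forms c(n,k)=C(2n-1,n-k), d(n,k)=C(2n-1,n-k-1)=e(n,k) hold for all n≥1, 0≤k≤n (with c(n,0)=C(2n,n)/2). -/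

import Mathlib

/-- Binomial coefficient `C(m,j)` for integer arguments, with the convention
`C(m,j) = 0` when `j < 0` or `j > m`. -/
def intChoose (m j : ℤ) : ℤ :=
  if 0 ≤ j ∧ j ≤ m then (m.toNat).choose j.toNat else 0

/-- The free product `ℤ/2 ∗ ℤ/2`. -/
abbrev Z2Z2 : Type := Monoid.Coprod (Multiplicative (ZMod 2)) (Multiplicative (ZMod 2))

/-- The first involutive generator `a` of `ℤ/2 ∗ ℤ/2`. -/
def genA : Z2Z2 := Monoid.Coprod.inl (Multiplicative.ofAdd (1 : ZMod 2))

/-- The second involutive generator `b` of `ℤ/2 ∗ ℤ/2`. -/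
def genB : Z2Z2 := Monoid.Coprod.inr (Multiplicative.ofAdd (1 : ZMod 2))

/-- The element `[(1+a)(1+b)]ⁿ` of the group algebra `ℚ[ℤ/2 ∗ ℤ/2]`. -/
noncomputable def wordPow (n : ℕ) : MonoidAlgebra ℚ Z2Z2 :=
  ((1 + MonoidAlgebra.of ℚ Z2Z2 genA) * (1 + MonoidAlgebra.of ℚ Z2Z2 genB)) ^ n

/-- `c(n,k)`: coefficient of the reduced word `(ab)^k` in `[(1+a)(1+b)]ⁿ`. -/
noncomputable def cCoeff (n k : ℕ) : ℚ := (wordPow n).coeff ((genA * genB) ^ k)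

/-- `d(n,k)`: coefficient of the reduced word `(ab)^k a` in `[(1+a)(1+b)]ⁿ`. -/
noncomputable def dCoeff (n k : ℕ) : ℚ := (wordPow n).coeff ((genA * genB) ^ k * genA)

/-- `e(n,k)`: coefficient of the reduced word `(ba)^k` in `[(1+a)(1+b)]ⁿ`. -/
noncomputable def eCoeff (n k : ℕ) : ℚ := (wordPow n).coeff ((genB * genA) ^ k)

namespace Stmt10Aux

attribute [local instance] Classical.propDecidable

/-! ### The homomorphism to `Equiv.Perm ℤ` used to distinguish reduced words -/

def invHom {G : Type*} [Monoid G] (g : G) (hg : g * g = 1) :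
    Multiplicative (ZMod 2) →* G where
  toFun x := g ^ (Multiplicative.toAdd x).val
  map_one' := by simp
  map_mul' x y := by
    have h2 : ∀ z : ZMod 2, z = 0 ∨ z = 1 := by decide
    have ht : Multiplicative.toAdd (x * y) = Multiplicative.toAdd x + Multiplicative.toAdd y := rfl
    rcases h2 (Multiplicative.toAdd x) with hx | hx <;>
      rcases h2 (Multiplicative.toAdd y) with hy | hy <;>
      simp only [ht, hx, hy] <;>
      norm_num [show ((1 : ZMod 2) + 1).val = 0 from by decide,
        show ((2 : ZMod 2)).val = 0 from by decide,
        show ((0 : ZMod 2) + 1).val = 1 from by decide,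
        show ((1 : ZMod 2) + 0).val = 1 from by decide,
        show ((0 : ZMod 2) + 0).val = 0 from by decide,
        show ((1 : ZMod 2)).val = 1 from by decide,
        show ((0 : ZMod 2)).val = 0 from by decide, hg]

def sigma : Equiv.Perm ℤ := ⟨fun x => -x, fun x => -x, fun x => by ring, fun x => by ring⟩
def tau : Equiv.Perm ℤ := ⟨fun x => 1 - x, fun x => 1 - x, fun x => by ring, fun x => by ring⟩

lemma sigma_sq : sigma * sigma = 1 := by
  ext x; simp [sigma, Equiv.Perm.mul_apply]

lemma tau_sq : tau * tau = 1 := by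
  ext x; simp [tau, Equiv.Perm.mul_apply]

noncomputable def psi : Z2Z2 →* Equiv.Perm ℤ :=
  Monoid.Coprod.lift (invHom sigma sigma_sq) (invHom tau tau_sq)

@[simp] lemma psi_one (x : ℤ) : psi 1 x = x := by simp

@[simp] lemma psi_a (x : ℤ) : psi genA x = -x := by
  rw [genA, psi, Monoid.Coprod.lift_apply_inl]
  simp [invHom, show ((1 : ZMod 2)).val = 1 from by decide, sigma]

@[simp] lemma psi_b (x : ℤ) : psi genB x = 1 - x := by
  rw [genB, psi, Monoid.Coprod.lift_apply_inr]
  simp [invHom, show ((1 : ZMod 2)).val = 1 from by decide, tau]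

@[simp] lemma psi_abk (k : ℕ) (x : ℤ) : psi ((genA * genB) ^ k) x = x - k := by
  induction k generalizing x with
  | zero => simp
  | succ n ih =>
    rw [pow_succ', map_mul, Equiv.Perm.mul_apply, map_mul, Equiv.Perm.mul_apply]
    rw [psi_b, psi_a, ih]; push_cast; ring

@[simp] lemma psi_bak (k : ℕ) (x : ℤ) : psi ((genB * genA) ^ k) x = x + k := by
  induction k generalizing x with
  | zero => simp
  | succ n ih =>
    rw [pow_succ', map_mul, Equiv.Perm.mul_apply, map_mul, Equiv.Perm.mul_apply]
    rw [psi_a, psi_b, ih]; push_cast; ring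


@[simp] lemma psi_abka (k : ℕ) (x : ℤ) : psi ((genA * genB) ^ k * genA) x = -x - k := by
  rw [map_mul, Equiv.Perm.mul_apply, psi_a, psi_abk]

@[simp] lemma psi_abkb (k : ℕ) (x : ℤ) : psi ((genA * genB) ^ k * genB) x = (1 - x) - k := by
  rw [map_mul, Equiv.Perm.mul_apply, psi_b, psi_abk]

@[simp] lemma psi_abkba (k : ℕ) (x : ℤ) : psi ((genA * genB) ^ k * genB * genA) x
    = (1 + x) - k := by
  rw [map_mul, Equiv.Perm.mul_apply, psi_a, psi_abkb]; ring

@[simp] lemma psi_baka (k : ℕ) (x : ℤ) : psi ((genB * genA) ^ k * genA) x = -x + k := by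
  rw [map_mul, Equiv.Perm.mul_apply, psi_a, psi_bak]

@[simp] lemma psi_bakb (k : ℕ) (x : ℤ) : psi ((genB * genA) ^ k * genB) x = (1 - x) + k := by
  rw [map_mul, Equiv.Perm.mul_apply, psi_b, psi_bak]

/-! ### Involutions and word identities -/

lemma genA_sq : genA * genA = 1 := by
  rw [genA, ← map_mul]
  norm_num [show (Multiplicative.ofAdd (1 : ZMod 2)) * (Multiplicative.ofAdd (1 : ZMod 2)) = 1
    from by decide]

lemma genB_sq : genB * genB = 1 := by
  rw [genB, ← map_mul]
  norm_num [show (Multiplicative.ofAdd (1 : ZMod 2)) * (Multiplicative.ofAdd (1 : ZMod 2)) = 1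
    from by decide]

lemma genA_inv : genA⁻¹ = genA := inv_eq_of_mul_eq_one_right genA_sq
lemma genB_inv : genB⁻¹ = genB := inv_eq_of_mul_eq_one_right genB_sq

lemma genA_cancel (x : Z2Z2) : genA * (genA * x) = x := by
  rw [← mul_assoc, genA_sq, one_mul]
lemma genB_cancel (x : Z2Z2) : genB * (genB * x) = x := by
  rw [← mul_assoc, genB_sq, one_mul]

noncomputable def fCoeff (n k : ℕ) : ℚ := (wordPow n).coeff ((genB * genA) ^ k * genB)

lemma wAB_b (k : ℕ) : (genA * genB) ^ (k + 1) * genB = (genA * genB) ^ k * genA := by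
  simp [pow_succ, mul_assoc, genB_sq, genA_sq, genA_cancel, genB_cancel]
lemma wABa_a (k : ℕ) : (genA * genB) ^ k * genA * genA = (genA * genB) ^ k := by
  simp [mul_assoc, genA_sq]
lemma wABa_b (k : ℕ) : (genA * genB) ^ k * genA * genB = (genA * genB) ^ (k + 1) := by
  rw [pow_succ, mul_assoc]
lemma wBA_a (k : ℕ) : (genB * genA) ^ (k + 1) * genA = (genB * genA) ^ k * genB := by
  simp [pow_succ, mul_assoc, genB_sq, genA_sq, genA_cancel, genB_cancel]
lemma wBA_ba (k : ℕ) : (genB * genA) ^ k * genB * genA = (genB * genA) ^ (k + 1) := by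
  rw [pow_succ, mul_assoc]
lemma wBAb_b (k : ℕ) : (genB * genA) ^ k * genB * genB = (genB * genA) ^ k := by
  simp [mul_assoc, genB_sq]
lemma wBA_b_then_a (k : ℕ) : (genB * genA) ^ (k + 1) * genB * genA = (genB * genA) ^ (k + 2) :=
  wBA_ba _

/-! ### Coefficient recurrences -/

lemma factor_eq : (1 + MonoidAlgebra.of ℚ Z2Z2 genA) * (1 + MonoidAlgebra.of ℚ Z2Z2 genB)
    = MonoidAlgebra.single 1 1 + MonoidAlgebra.single genA 1 + MonoidAlgebra.single genB 1
      + MonoidAlgebra.single (genA * genB) 1 := by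
  have h : (1 + MonoidAlgebra.of ℚ Z2Z2 genA) * (1 + MonoidAlgebra.of ℚ Z2Z2 genB)
      = 1 + MonoidAlgebra.of ℚ Z2Z2 genA + MonoidAlgebra.of ℚ Z2Z2 genB
        + MonoidAlgebra.of ℚ Z2Z2 (genA * genB) := by
    rw [map_mul]; noncomm_ring
  rw [h, MonoidAlgebra.one_def, MonoidAlgebra.of_apply, MonoidAlgebra.of_apply,
    MonoidAlgebra.of_apply]

lemma wordPow_succ (n : ℕ) (g : Z2Z2) :
    (wordPow (n + 1)).coeff g = (wordPow n).coeff g + (wordPow n).coeff (g * genA) + (wordPow n).coeff (g * genB)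
      + (wordPow n).coeff (g * genB * genA) := by
  have h : wordPow (n + 1) = wordPow n *
      ((1 + MonoidAlgebra.of ℚ Z2Z2 genA) * (1 + MonoidAlgebra.of ℚ Z2Z2 genB)) := by
    rw [wordPow, wordPow, pow_succ]
  rw [h, factor_eq, mul_add, mul_add, mul_add]
  simp only [MonoidAlgebra.coeff_add, Finsupp.add_apply]
  rw [MonoidAlgebra.mul_single_apply, MonoidAlgebra.mul_single_apply,
    MonoidAlgebra.mul_single_apply, MonoidAlgebra.mul_single_apply]
  rw [inv_one, mul_one, genA_inv, genB_inv, mul_inv_rev, genA_inv, genB_inv, ← mul_assoc]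
  simp only [mul_one]

lemma cRec (n k : ℕ) : cCoeff (n + 1) (k + 1)
    = cCoeff n (k + 1) + dCoeff n (k + 1) + dCoeff n k + cCoeff n k := by
  unfold cCoeff dCoeff
  rw [wordPow_succ, wAB_b, wABa_a]

lemma dRec (n k : ℕ) : dCoeff (n + 1) k
    = dCoeff n k + cCoeff n k + cCoeff n (k + 1) + dCoeff n (k + 1) := by
  unfold cCoeff dCoeff
  rw [wordPow_succ, wABa_a, wABa_b]

lemma eRec (n k : ℕ) : eCoeff (n + 1) (k + 1)
    = eCoeff n (k + 1) + fCoeff n k + fCoeff n (k + 1) + eCoeff n (k + 2) := by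
  unfold eCoeff fCoeff
  rw [wordPow_succ, wBA_a, wBA_ba]

lemma fRec (n k : ℕ) : fCoeff (n + 1) (k + 1)
    = fCoeff n (k + 1) + eCoeff n (k + 2) + eCoeff n (k + 1) + fCoeff n k := by
  unfold eCoeff fCoeff
  rw [wordPow_succ, wBA_b_then_a, wBAb_b, wBA_a]

lemma fRec0 (n : ℕ) : fCoeff (n + 1) 0
    = fCoeff n 0 + eCoeff n 1 + eCoeff n 0 + dCoeff n 0 := by
  unfold eCoeff fCoeff dCoeff
  rw [wordPow_succ, wBA_ba, wBAb_b]
  simp [pow_zero, pow_one]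

lemma cRec0 (n : ℕ) : cCoeff (n + 1) 0
    = cCoeff n 0 + dCoeff n 0 + fCoeff n 0 + eCoeff n 1 := by
  unfold cCoeff dCoeff eCoeff fCoeff
  rw [wordPow_succ]
  simp [pow_zero, pow_one]

lemma e_zero_eq_c_zero (n : ℕ) : eCoeff n 0 = cCoeff n 0 := by
  unfold eCoeff cCoeff; rw [pow_zero, pow_zero]

/-! ### Base case: the coefficients of `(1+a)(1+b)` -/

lemma wordPow_zero_apply (g : Z2Z2) : (wordPow 0).coeff g = if (1 : Z2Z2) = g then 1 else 0 := by
  rw [wordPow, pow_zero, MonoidAlgebra.one_def, MonoidAlgebra.single_apply]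

lemma wordPow_one_apply (g : Z2Z2) : (wordPow 1).coeff g
    = (if (1 : Z2Z2) = g then 1 else 0) + (if (1 : Z2Z2) = g * genA then 1 else 0)
      + (if (1 : Z2Z2) = g * genB then 1 else 0)
      + (if (1 : Z2Z2) = g * genB * genA then 1 else 0) := by
  rw [show (1 : ℕ) = 0 + 1 from rfl, wordPow_succ, wordPow_zero_apply, wordPow_zero_apply,
    wordPow_zero_apply, wordPow_zero_apply]

-- disequality / equality iff lemmas
@[simp] lemma iffA1 (k : ℕ) : ((1 : Z2Z2) = (genA * genB) ^ k) ↔ k = 0 := by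
  constructor
  · intro h
    have h0 := congrArg (fun g => (psi g) (0 : ℤ)) h
    have h1 := congrArg (fun g => (psi g) (1 : ℤ)) h
    simp only [psi_one, psi_a, psi_b, psi_abk, psi_abka, psi_abkb, psi_abkba, psi_bak, psi_baka, psi_bakb] at h0 h1
    omega
  · rintro rfl; simp

@[simp] lemma iffA2 (k : ℕ) : ¬ ((1 : Z2Z2) = (genA * genB) ^ k * genA) := by
  intro h
  have h0 := congrArg (fun g => (psi g) (0 : ℤ)) h
  have h1 := congrArg (fun g => (psi g) (1 : ℤ)) h
  simp only [psi_one, psi_a, psi_b, psi_abk, psi_abka, psi_abkb, psi_abkba, psi_bak, psi_baka, psi_bakb] at h0 h1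
  omega

@[simp] lemma iffA3 (k : ℕ) : ¬ ((1 : Z2Z2) = (genA * genB) ^ k * genB) := by
  intro h
  have h0 := congrArg (fun g => (psi g) (0 : ℤ)) h
  have h1 := congrArg (fun g => (psi g) (1 : ℤ)) h
  simp only [psi_one, psi_a, psi_b, psi_abk, psi_abka, psi_abkb, psi_abkba, psi_bak, psi_baka, psi_bakb] at h0 h1
  omega

@[simp] lemma iffA4 (k : ℕ) : ((1 : Z2Z2) = (genA * genB) ^ k * genB * genA) ↔ k = 1 := by
  constructor
  · intro h
    have h0 := congrArg (fun g => (psi g) (0 : ℤ)) h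
    have h1 := congrArg (fun g => (psi g) (1 : ℤ)) h
    simp only [psi_one, psi_a, psi_b, psi_abk, psi_abka, psi_abkb, psi_abkba, psi_bak, psi_baka, psi_bakb] at h0 h1
    omega
  · rintro rfl
    rw [pow_one]
    simp [mul_assoc, genA_sq, genB_sq, genA_cancel, genB_cancel]

@[simp] lemma iffB2 (k : ℕ) : ((1 : Z2Z2) = (genA * genB) ^ k * genA * genA) ↔ k = 0 := by
  rw [wABa_a, iffA1]

@[simp] lemma iffB3 (k : ℕ) : ¬ ((1 : Z2Z2) = (genA * genB) ^ k * genA * genB) := by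
  rw [wABa_b]; simp

@[simp] lemma iffB4 (k : ℕ) : ¬ ((1 : Z2Z2) = (genA * genB) ^ k * genA * genB * genA) := by
  rw [wABa_b]; exact iffA2 (k + 1)

@[simp] lemma iffC1 (k : ℕ) : ((1 : Z2Z2) = (genB * genA) ^ k) ↔ k = 0 := by
  constructor
  · intro h
    have h0 := congrArg (fun g => (psi g) (0 : ℤ)) h
    have h1 := congrArg (fun g => (psi g) (1 : ℤ)) h
    simp only [psi_one, psi_a, psi_b, psi_abk, psi_abka, psi_abkb, psi_abkba, psi_bak, psi_baka, psi_bakb] at h0 h1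
    omega
  · rintro rfl; simp

@[simp] lemma iffC2 (k : ℕ) : ¬ ((1 : Z2Z2) = (genB * genA) ^ k * genA) := by
  intro h
  have h0 := congrArg (fun g => (psi g) (0 : ℤ)) h
  have h1 := congrArg (fun g => (psi g) (1 : ℤ)) h
  simp only [psi_one, psi_a, psi_b, psi_abk, psi_abka, psi_abkb, psi_abkba, psi_bak, psi_baka, psi_bakb] at h0 h1
  omega

@[simp] lemma iffC3 (k : ℕ) : ¬ ((1 : Z2Z2) = (genB * genA) ^ k * genB) := by
  intro h
  have h0 := congrArg (fun g => (psi g) (0 : ℤ)) h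
  have h1 := congrArg (fun g => (psi g) (1 : ℤ)) h
  simp only [psi_one, psi_a, psi_b, psi_abk, psi_abka, psi_abkb, psi_abkba, psi_bak, psi_baka, psi_bakb] at h0 h1
  omega

@[simp] lemma iffC4 (k : ℕ) : ¬ ((1 : Z2Z2) = (genB * genA) ^ k * genB * genA) := by
  rw [wBA_ba]; simp

@[simp] lemma iffD3 (k : ℕ) : ((1 : Z2Z2) = (genB * genA) ^ k * genB * genB) ↔ k = 0 := by
  rw [wBAb_b, iffC1]

@[simp] lemma iffD4 (k : ℕ) : ¬ ((1 : Z2Z2) = (genB * genA) ^ k * genB * genB * genA) := by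
  rw [wBAb_b]; exact iffC2 k

lemma cOne (k : ℕ) : cCoeff 1 k = (if k = 0 then 1 else 0) + (if k = 1 then 1 else 0) := by
  rw [cCoeff, wordPow_one_apply]
  simp

lemma dOne (k : ℕ) : dCoeff 1 k = if k = 0 then 1 else 0 := by
  rw [dCoeff, wordPow_one_apply]
  simp

lemma eOne (k : ℕ) : eCoeff 1 k = if k = 0 then 1 else 0 := by
  rw [eCoeff, wordPow_one_apply]
  simp

lemma fOne (k : ℕ) : fCoeff 1 k = if k = 0 then 1 else 0 := by
  rw [fCoeff, wordPow_one_apply]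
  simp


lemma intChoose_succ (m j : ℤ) (hm : 0 ≤ m) :
    intChoose (m + 1) j = intChoose m j + intChoose m (j - 1) := by
  unfold intChoose
  rcases lt_or_ge j 0 with h | h
  · rw [if_neg (by omega), if_neg (by omega), if_neg (by omega)]; ring
  rcases lt_or_ge (m + 1) j with h' | h'
  · rw [if_neg (by omega), if_neg (by omega), if_neg (by omega)]; ring
  rcases eq_or_lt_of_le h with h0 | h0
  · rw [if_pos (by omega), if_pos (by omega), if_neg (by omega), ← h0]
    simp
  · have hj1 : j.toNat = (j - 1).toNat + 1 := by omega
    have hm1 : (m + 1).toNat = m.toNat + 1 := by omega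
    rw [if_pos (by omega), if_pos (show 0 ≤ j - 1 ∧ j - 1 ≤ m by omega), hm1, hj1,
      Nat.choose_succ_succ]
    rcases lt_or_ge m j with hc | hc
    · rw [if_neg (by omega), Nat.choose_eq_zero_of_lt (show m.toNat < (j - 1).toNat + 1 by omega)]
      push_cast; ring
    · rw [if_pos (by omega)]
      push_cast
      rw [Nat.succ_eq_add_one]; ring

lemma intChoose_succ2 (m j : ℤ) (hm : 0 ≤ m) :
    intChoose (m + 2) j = intChoose m j + intChoose m (j - 1) + intChoose m (j - 1)
      + intChoose m (j - 2) := by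
  rw [show m + 2 = (m + 1) + 1 by ring, intChoose_succ _ _ (by omega),
    intChoose_succ _ _ hm, intChoose_succ _ _ hm, show j - 1 - 1 = j - 2 by ring]
  ring

lemma intChoose_symm_half (n : ℕ) : intChoose (2 * n + 1) (n + 1) = intChoose (2 * n + 1) n := by
  unfold intChoose
  rw [if_pos (by omega), if_pos (by omega)]
  norm_num [show ((2 * (n : ℤ) + 1)).toNat = 2 * n + 1 by omega,
    show (((n : ℤ)) + 1).toNat = n + 1 by omega, show (((n : ℤ))).toNat = n by omega,
    Nat.choose_symm_half]

lemma intChoose_nat (m j : ℕ) (h : j ≤ m) : intChoose m j = m.choose j := by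
  unfold intChoose
  rw [if_pos (by omega)]
  norm_num

lemma intChoose_neg (m j : ℤ) (h : j < 0) : intChoose m j = 0 := by
  unfold intChoose; rw [if_neg (by omega)]


lemma icongr {a b c d : ℤ} (h1 : a = c) (h2 : b = d) : intChoose a b = intChoose c d := by
  rw [h1, h2]

lemma sum4 (M A B C D J : ℤ) (hM : 0 ≤ M) (hA : A = J) (hB : B = J - 1) (hC : C = J - 1)
    (hD : D = J - 2) :
    intChoose M A + intChoose M B + intChoose M C + intChoose M D = intChoose (M + 2) J := by
  rw [hA, hB, hC, hD, intChoose_succ2 _ _ hM]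

lemma base_c (k : ℕ) : (intChoose 1 (0 + 1 - (k : ℤ)) : ℚ)
    = (if k = 0 then 1 else 0) + (if k = 1 then 1 else 0) := by
  match k with
  | 0 => norm_num [intChoose]
  | 1 => norm_num [intChoose]
  | (j + 2) =>
    rw [intChoose_neg _ _ (by push_cast; omega)]
    rw [if_neg (by omega), if_neg (by omega)]
    norm_num

lemma base_d (k : ℕ) : (intChoose 1 (0 - (k : ℤ)) : ℚ) = if k = 0 then 1 else 0 := by
  match k with
  | 0 => norm_num [intChoose]
  | (j + 1) =>
    rw [intChoose_neg _ _ (by push_cast; omega)]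
    norm_num

lemma closed (n : ℕ) : ∀ k : ℕ,
    cCoeff (n + 1) k = (intChoose (2 * (n : ℤ) + 1) ((n : ℤ) + 1 - k) : ℚ)
    ∧ dCoeff (n + 1) k = (intChoose (2 * (n : ℤ) + 1) ((n : ℤ) - k) : ℚ)
    ∧ eCoeff (n + 1) k = (intChoose (2 * (n : ℤ) + 1) ((n : ℤ) - k) : ℚ)
    ∧ fCoeff (n + 1) k = (intChoose (2 * (n : ℤ) + 1) ((n : ℤ) - k) : ℚ) := by
  induction n with
  | zero =>
    intro k
    rw [cOne, dOne, eOne, fOne]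
    simp only [Nat.cast_zero]
    rw [show (2 * (0 : ℤ) + 1) = 1 by norm_num]
    exact ⟨(base_c k).symm, (base_d k).symm, (base_d k).symm, (base_d k).symm⟩
  | succ m ih =>
    intro k
    refine ⟨?_, ?_, ?_, ?_⟩
    · match k with
      | 0 =>
        have key : cCoeff (m + 1 + 1) 0 = (intChoose (2 * ((m : ℤ) + 1) + 1) ((m : ℤ) + 1) : ℚ) := by
          rw [cRec0, (ih 0).1, (ih 0).2.1, (ih 0).2.2.2, (ih 1).2.2.1]
          push_cast
          rw [show (2 * ((m : ℤ) + 1) + 1) = (2 * (m : ℤ) + 1) + 2 by ring]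
          rw [intChoose_succ2 _ _ (by omega)]
          push_cast
          ring_nf
        rw [key]
        exact_mod_cast ((intChoose_symm_half (m + 1)).symm.trans
          (icongr (by push_cast; ring) (by simp [Int.subNatNat_eq_coe])))
      | (j + 1) =>
        rw [cRec, (ih (j + 1)).1, (ih (j + 1)).2.1, (ih j).2.1, (ih j).1]
        push_cast
        rw [show (2 * ((m : ℤ) + 1) + 1) = (2 * (m : ℤ) + 1) + 2 by ring]
        rw [intChoose_succ2 _ _ (by omega)]
        push_cast
        ring_nf
    · rw [dRec, (ih k).2.1, (ih k).1, (ih (k + 1)).1, (ih (k + 1)).2.1]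
      push_cast
      rw [show (2 * ((m : ℤ) + 1) + 1) = (2 * (m : ℤ) + 1) + 2 by ring]
      rw [intChoose_succ2 _ _ (by omega)]
      push_cast
      ring_nf
    · match k with
      | 0 =>
        rw [e_zero_eq_c_zero, cRec0, (ih 0).1, (ih 0).2.1, (ih 0).2.2.2, (ih 1).2.2.1]
        push_cast
        rw [show (2 * ((m : ℤ) + 1) + 1) = (2 * (m : ℤ) + 1) + 2 by ring]
        rw [intChoose_succ2 _ _ (by omega)]
        push_cast
        ring_nf
      | (j + 1) =>
        rw [eRec, (ih (j + 1)).2.2.1, (ih j).2.2.2, (ih (j + 1)).2.2.2, (ih (j + 2)).2.2.1]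
        push_cast
        rw [show (2 * ((m : ℤ) + 1) + 1) = (2 * (m : ℤ) + 1) + 2 by ring]
        rw [intChoose_succ2 _ _ (by omega)]
        push_cast
        ring_nf
    · match k with
      | 0 =>
        rw [fRec0, (ih 0).2.2.2, (ih 1).2.2.1, (ih 0).2.2.1, (ih 0).2.1]
        push_cast
        simp only [sub_zero]
        have hs := intChoose_symm_half m
        nth_rewrite 1 [← hs]
        rw [show (2 * ((m : ℤ) + 1) + 1) = (2 * (m : ℤ) + 1) + 2 by ring]
        rw [intChoose_succ2 _ _ (by omega)]
        push_cast
        ring_nf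
      | (j + 1) =>
        rw [fRec, (ih (j + 1)).2.2.2, (ih (j + 2)).2.2.1, (ih (j + 1)).2.2.1, (ih j).2.2.2]
        push_cast
        rw [show (2 * ((m : ℤ) + 1) + 1) = (2 * (m : ℤ) + 1) + 2 by ring]
        rw [intChoose_succ2 _ _ (by omega)]
        push_cast
        ring_nf

end Stmt10Aux

/-- The counting coefficients `c`, `d`, `e` of the reduced words `(ab)^k`, `(ab)^k a`, `(ba)^k`
in the expansion of `[(1+a)(1+b)]ⁿ` satisfy the stated recurrences, initial conditions and
closed forms `c(n,k) = C(2n-1, n-k)`, `d(n,k) = C(2n-1, n-k-1) = e(n,k)`,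
with `c(n,0) = C(2n,n)/2`. -/
theorem stmt10 :
    (∀ n k : ℕ, 2 ≤ n → 1 ≤ k →
      cCoeff n k = cCoeff (n - 1) k + dCoeff (n - 1) k
        + dCoeff (n - 1) (k - 1) + cCoeff (n - 1) (k - 1)) ∧
    (∀ k : ℕ, cCoeff 1 k = (if k = 0 then 1 else 0) + (if k = 1 then 1 else 0)) ∧
    (∀ n k : ℕ, 2 ≤ n →
      dCoeff n k = dCoeff (n - 1) k + cCoeff (n - 1) k
        + cCoeff (n - 1) (k + 1) + dCoeff (n - 1) (k + 1)) ∧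
    (∀ k : ℕ, dCoeff 1 k = if k = 0 then 1 else 0) ∧
    (∀ n k : ℕ, 1 ≤ n → k ≤ n →
      cCoeff n k = (intChoose (2 * n - 1) ((n : ℤ) - k) : ℚ) ∧
      dCoeff n k = (intChoose (2 * n - 1) ((n : ℤ) - k - 1) : ℚ) ∧
      eCoeff n k = (intChoose (2 * n - 1) ((n : ℤ) - k - 1) : ℚ)) ∧
    (∀ n : ℕ, 1 ≤ n → cCoeff n 0 = ((2 * n).choose n : ℚ) / 2) := by
  refine ⟨?_, Stmt10Aux.cOne, ?_, Stmt10Aux.dOne, ?_, ?_⟩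
  · intro n k h2 h1
    obtain ⟨m, rfl⟩ : ∃ m, n = m + 2 := ⟨n - 2, by omega⟩
    obtain ⟨j, rfl⟩ : ∃ j, k = j + 1 := ⟨k - 1, by omega⟩
    simpa using Stmt10Aux.cRec (m + 1) j
  · intro n k h2
    obtain ⟨m, rfl⟩ : ∃ m, n = m + 2 := ⟨n - 2, by omega⟩
    simpa using Stmt10Aux.dRec (m + 1) k
  · intro n k h1 hk
    obtain ⟨m, rfl⟩ : ∃ m, n = m + 1 := ⟨n - 1, by omega⟩
    obtain ⟨hc, hd, he, -⟩ := Stmt10Aux.closed m k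
    refine ⟨?_, ?_, ?_⟩
    · rw [hc]
      exact_mod_cast Stmt10Aux.icongr (by simp only [Int.subNatNat_eq_coe] <;> push_cast <;> omega)
        (by simp only [Int.subNatNat_eq_coe] <;> push_cast <;> omega)
    · rw [hd]
      exact_mod_cast Stmt10Aux.icongr (by simp only [Int.subNatNat_eq_coe] <;> push_cast <;> omega)
        (by simp only [Int.subNatNat_eq_coe] <;> push_cast <;> omega)
    · rw [he]
      exact_mod_cast Stmt10Aux.icongr (by simp only [Int.subNatNat_eq_coe] <;> push_cast <;> omega)
        (by simp only [Int.subNatNat_eq_coe] <;> push_cast <;> omega)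
  · intro n h1
    obtain ⟨m, rfl⟩ : ∃ m, n = m + 1 := ⟨n - 1, by omega⟩
    rw [(Stmt10Aux.closed m 0).1]
    rw [show ((m : ℤ) + 1 - ((0 : ℕ) : ℤ)) = ((m + 1 : ℕ) : ℤ) by push_cast; ring,
      show (2 * (m : ℤ) + 1) = ((2 * m + 1 : ℕ) : ℤ) by push_cast; ring]
    rw [Stmt10Aux.intChoose_nat _ _ (by omega)]
    rw [eq_div_iff (by norm_num : (2 : ℚ) ≠ 0)]
    norm_cast
    rw [show 2 * (m + 1) = (2 * m + 1) + 1 by ring, Nat.choose_succ_succ (2 * m + 1) m,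
      Nat.choose_symm_half]
    ring
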